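/- Let W, W' be closed subspaces of a Hilbert space H such that W ∩ W' has finite codimension in both W and W'. Then the orthogonal projection pr₊ : W → H⁺ is Fredholm if and only if pr₊ : W' → H⁺ is Fredholm, and pr₋ : W → (H⁺)^⊥ is compact if and only if pr₋ : W' → (H⁺)^⊥ is compact. Consequently W ∈ Gr⁺(H) iff W' ∈ Gr⁺(H). -/

import Mathlib

open Module Submodule

noncomputable section

variable {H : Type*} [NormedAddCommGroup H] [InnerProductSpace ℂ H] [CompleteSpace H]

def IsFredholm {E F : Type*} [NormedAddCommGroup E] [InnerProductSpace ℂ E]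
    [NormedAddCommGroup F] [InnerProductSpace ℂ F] (T : E →L[ℂ] F) : Prop :=
  FiniteDimensional ℂ (LinearMap.ker (T : E →ₗ[ℂ] F)) ∧
  FiniteDimensional ℂ (F ⧸ LinearMap.range (T : E →ₗ[ℂ] F)) ∧
  IsClosed (LinearMap.range (T : E →ₗ[ℂ] F) : Set F)

def InGr (Hp : Submodule ℂ H) [HasOrthogonalProjection Hp] (W : Submodule ℂ H) : Prop :=
  IsClosed (W : Set H) ∧
  IsFredholm ((orthogonalProjection Hp).comp W.subtypeL) ∧
  IsCompactOperator ((orthogonalProjection Hpᗮ).comp W.subtypeL)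

theorem injective_codRestrict' {R M M₂ : Type*} [Semiring R] [AddCommMonoid M]
    [AddCommMonoid M₂] [Module R M] [Module R M₂] (p : Submodule R M₂) (f : M →ₗ[R] M₂)
    (h : ∀ c, f c ∈ p) (hf : Function.Injective f) :
    Function.Injective (LinearMap.codRestrict p f h) :=
  fun _ _ hab => hf (congrArg Subtype.val hab)

theorem orthogonalProjection_add_orthogonalProjection_orthogonal {E : Type*}
    [NormedAddCommGroup E] [InnerProductSpace ℂ E] (K : Submodule ℂ E)
    [K.HasOrthogonalProjection] (w : E) :
    (orthogonalProjection K w : E) + (orthogonalProjection Kᗮ w : E) = w :=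
  K.starProjection_add_starProjection_orthogonal w

/-- A vector space with a finite-dimensional subspace having finite-dimensional quotient is
finite-dimensional. -/
theorem findim_ext {K M : Type*} [DivisionRing K] [AddCommGroup M] [Module K M]
    (p : Submodule K M) (h1 : FiniteDimensional K p) (h2 : FiniteDimensional K (M ⧸ p)) :
    FiniteDimensional K M := by
  have hr := Submodule.rank_quotient_add_rank p
  have hlt : Module.rank K M < Cardinal.aleph0 := by
    rw [← hr]
    exact Cardinal.add_lt_aleph0 (Module.rank_lt_aleph0_iff.2 h2) (Module.rank_lt_aleph0_iff.2 h1)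
  exact Module.rank_lt_aleph0_iff.1 hlt

/-- A continuous linear map out of a finite-dimensional space is a compact operator. -/
theorem isCompactOperator_of_findim_domain {X Y : Type*} [NormedAddCommGroup X]
    [NormedSpace ℂ X] [FiniteDimensional ℂ X] [NormedAddCommGroup Y] [NormedSpace ℂ Y]
    (f : X →L[ℂ] Y) : IsCompactOperator f := by
  refine ⟨f '' Metric.closedBall 0 1, (isCompact_closedBall (0 : X) 1).image f.continuous, ?_⟩
  exact Filter.mem_of_superset (Metric.closedBall_mem_nhds (0 : X) one_pos)
    (Set.subset_preimage_image _ _)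

/-- A continuous linear map between Hilbert-type spaces with finite-dimensional cokernel has
closed range. -/
theorem closedRange_of_findim_coker {X Y : Type*} [NormedAddCommGroup X]
    [InnerProductSpace ℂ X] [CompleteSpace X] [NormedAddCommGroup Y] [NormedSpace ℂ Y]
    [CompleteSpace Y] (T : X →L[ℂ] Y)
    (h : FiniteDimensional ℂ (Y ⧸ LinearMap.range T.toLinearMap)) :
    IsClosed (LinearMap.range T.toLinearMap : Set Y) := by
  obtain ⟨F, hF⟩ := Submodule.exists_isCompl (LinearMap.range T.toLinearMap)
  haveI : FiniteDimensional ℂ F :=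
    (Submodule.quotientEquivOfIsCompl _ F hF).finiteDimensional
  have hFc : IsClosed (F : Set Y) := F.closed_of_finiteDimensional
  have hkerc : IsClosed ((LinearMap.ker T.toLinearMap : Submodule ℂ X) : Set X) := ContinuousLinearMap.isClosed_ker T
  haveI : CompleteSpace (LinearMap.ker T.toLinearMap) := hkerc.completeSpace_coe
  haveI : CompleteSpace ((LinearMap.ker T.toLinearMap)ᗮ : Submodule ℂ X) :=
    (LinearMap.ker T.toLinearMap).isClosed_orthogonal.completeSpace_coe
  haveI : CompleteSpace F := hFc.completeSpace_coe
  set S : ((LinearMap.ker T.toLinearMap)ᗮ × F) →L[ℂ] Y :=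
    (T.comp (LinearMap.ker T.toLinearMap)ᗮ.subtypeL).coprod F.subtypeL with hS
  have hSapp : ∀ p : ((LinearMap.ker T.toLinearMap)ᗮ × F), S p = T (p.1 : X) + (p.2 : Y) := fun p => rfl
  have hinj : LinearMap.ker S.toLinearMap = ⊥ := by
    rw [LinearMap.ker_eq_bot']
    rintro ⟨k, f⟩ hm
    rw [ContinuousLinearMap.coe_coe, hSapp] at hm
    have hTk : T (k : X) = 0 := by
      refine Submodule.disjoint_def.1 hF.disjoint _ ⟨k, rfl⟩ ?_
      have : T (k : X) = -(f : Y) := by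
        have := hm; rw [add_eq_zero_iff_eq_neg] at this; exact this
      rw [this]; exact F.neg_mem f.2
    have hf : (f : Y) = 0 := by rw [hTk, zero_add] at hm; exact hm
    have hk : (k : X) = 0 := by
      refine Submodule.disjoint_def.1 (LinearMap.ker T.toLinearMap).orthogonal_disjoint _ ?_ k.2
      exact LinearMap.mem_ker.2 hTk
    exact Prod.ext (Subtype.ext hk) (Subtype.ext hf)
  have hTproj : ∀ x : X, T x = T ((orthogonalProjection (LinearMap.ker T.toLinearMap)ᗮ x : X)) := by
    intro x
    conv_lhs => rw [← orthogonalProjection_add_orthogonalProjection_orthogonal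
      (LinearMap.ker T.toLinearMap) x]
    rw [map_add]
    have h0 : T ((orthogonalProjection (LinearMap.ker T.toLinearMap) x : X)) = 0 :=
      LinearMap.mem_ker.1 (orthogonalProjection (LinearMap.ker T.toLinearMap) x).2
    rw [h0, zero_add]
  have hsurj : LinearMap.range S.toLinearMap = ⊤ := by
    rw [LinearMap.range_eq_top]
    intro y
    have hy : y ∈ LinearMap.range T.toLinearMap ⊔ F := by rw [hF.codisjoint.eq_top]; trivial
    obtain ⟨a, ha, b, hb, rfl⟩ := Submodule.mem_sup.1 hy
    obtain ⟨x, rfl⟩ := ha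
    refine ⟨(orthogonalProjection (LinearMap.ker T.toLinearMap)ᗮ x, ⟨b, hb⟩), ?_⟩
    rw [ContinuousLinearMap.coe_coe, hSapp]
    simp only
    rw [← hTproj x, ContinuousLinearMap.coe_coe]
  set e := ContinuousLinearEquiv.ofBijective S hinj hsurj with he
  have himg : (LinearMap.range T.toLinearMap : Set Y) = e '' (Set.univ ×ˢ {0}) := by
    ext y
    constructor
    · rintro ⟨x, rfl⟩
      refine ⟨(orthogonalProjection (LinearMap.ker T.toLinearMap)ᗮ x, 0), ⟨trivial, rfl⟩, ?_⟩
      rw [show e ((orthogonalProjection (LinearMap.ker T.toLinearMap)ᗮ x, 0) : (↥(LinearMap.ker T.toLinearMap)ᗮ × ↥F)) = S (orthogonalProjection (LinearMap.ker T.toLinearMap)ᗮ x, 0) from rfl, hSapp]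
      simp only [Submodule.coe_zero, add_zero]
      rw [← hTproj x, ContinuousLinearMap.coe_coe]
    · rintro ⟨⟨k, f⟩, ⟨-, hf⟩, rfl⟩
      have hf0 : f = 0 := hf
      rw [show e ((k, f) : (↥(LinearMap.ker T.toLinearMap)ᗮ × ↥F)) = S (k, f) from rfl, hSapp, hf0]
      simp only [Submodule.coe_zero, add_zero]
      exact ⟨k, rfl⟩
  rw [himg]
  exact e.toHomeomorph.isClosedMap _ (isClosed_univ.prod isClosed_singleton)

/-- Transfer of the Fredholm property along a finite-codimension inclusion `V ≤ W`. -/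
theorem fred_step {Y : Type*} [NormedAddCommGroup Y] [InnerProductSpace ℂ Y]
    [CompleteSpace Y] (T : H →L[ℂ] Y) (W V : Submodule ℂ H)
    (hWc : IsClosed (W : Set H)) (hVc : IsClosed (V : Set H)) (hVW : V ≤ W)
    (hfin : FiniteDimensional ℂ (↥W ⧸ V.comap W.subtype)) :
    IsFredholm (T.comp W.subtypeL) ↔ IsFredholm (T.comp V.subtypeL) := by
  haveI := hfin
  haveI : CompleteSpace W := hWc.completeSpace_coe
  haveI : CompleteSpace V := hVc.completeSpace_coe
  set A := T.comp W.subtypeL with hA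
  set B := T.comp V.subtypeL with hB
  have hApp : ∀ w : W, A w = T (w : H) := fun w => rfl
  have hBpp : ∀ v : V, B v = T (v : H) := fun v => rfl
  -- the kernel of B is finite-dimensional iff that of A is
  have hkerBA : FiniteDimensional ℂ (LinearMap.ker A.toLinearMap) → FiniteDimensional ℂ (LinearMap.ker B.toLinearMap) := by
    intro hk
    have hmem : ∀ x : LinearMap.ker B.toLinearMap, (Submodule.inclusion hVW) x.1 ∈ LinearMap.ker A.toLinearMap := by
      intro x
      have hx : B x.1 = 0 := x.2
      rw [LinearMap.mem_ker]
      rw [hBpp] at hx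
      rw [ContinuousLinearMap.coe_coe, hApp]
      simpa using hx
    let f : (LinearMap.ker B.toLinearMap) →ₗ[ℂ] (LinearMap.ker A.toLinearMap) :=
      LinearMap.codRestrict _ ((Submodule.inclusion hVW).comp (LinearMap.ker B.toLinearMap).subtype) hmem
    have hfinj : Function.Injective f :=
      injective_codRestrict' _ _ hmem
        ((Submodule.inclusion_injective hVW).comp (LinearMap.ker B.toLinearMap).injective_subtype)
    exact FiniteDimensional.of_injective f hfinj
  have hkerAB : FiniteDimensional ℂ (LinearMap.ker B.toLinearMap) → FiniteDimensional ℂ (LinearMap.ker A.toLinearMap) := by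
    intro hk
    set ψ : (LinearMap.ker A.toLinearMap) →ₗ[ℂ] (↥W ⧸ V.comap W.subtype) :=
      (V.comap W.subtype).mkQ.comp (LinearMap.ker A.toLinearMap).subtype with hψ
    have hmem1 : ∀ x : LinearMap.ker ψ,
        W.subtype ((LinearMap.ker A.toLinearMap).subtype ((LinearMap.ker ψ).subtype x)) ∈ V := by
      intro x
      have hx2 : (V.comap W.subtype).mkQ ((x.1 : ↥W)) = 0 := x.2
      simpa [Submodule.Quotient.mk_eq_zero] using hx2
    set g0 : (LinearMap.ker ψ) →ₗ[ℂ] V :=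
      LinearMap.codRestrict V
        (W.subtype.comp ((LinearMap.ker A.toLinearMap).subtype.comp (LinearMap.ker ψ).subtype)) hmem1
        with hg0
    have hmem2 : ∀ x : LinearMap.ker ψ, g0 x ∈ LinearMap.ker B.toLinearMap := by
      intro x
      rw [LinearMap.mem_ker, ContinuousLinearMap.coe_coe, hBpp]
      have hx : A (x.1 : ↥W) = 0 := x.1.2
      rw [hApp] at hx
      exact hx
    let g : (LinearMap.ker ψ) →ₗ[ℂ] (LinearMap.ker B.toLinearMap) := LinearMap.codRestrict _ g0 hmem2
    have hginj : Function.Injective g :=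
      injective_codRestrict' _ _ hmem2 (injective_codRestrict' _ _ hmem1
        (W.injective_subtype.comp
          ((LinearMap.ker A.toLinearMap).injective_subtype.comp (LinearMap.ker ψ).injective_subtype)))
    haveI hkψ : FiniteDimensional ℂ (LinearMap.ker ψ) := FiniteDimensional.of_injective g hginj
    haveI : FiniteDimensional ℂ (LinearMap.range ψ) :=
      FiniteDimensional.finiteDimensional_submodule _
    exact findim_ext (LinearMap.ker ψ) hkψ (ψ.quotKerEquivRange.symm.finiteDimensional)
  -- comparison of ranges
  have hRBA : LinearMap.range B.toLinearMap ≤ LinearMap.range A.toLinearMap := by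
    rintro y ⟨v, rfl⟩
    exact ⟨Submodule.inclusion hVW v, by show A (Submodule.inclusion hVW v) = B v; rw [hApp, hBpp]; simp⟩
  obtain ⟨F', hF'⟩ := Submodule.exists_isCompl (V.comap W.subtype)
  haveI : FiniteDimensional ℂ F' :=
    (Submodule.quotientEquivOfIsCompl _ F' hF').finiteDimensional
  have hmapV' : Submodule.map A.toLinearMap (V.comap W.subtype) = LinearMap.range B.toLinearMap := by
    ext y
    constructor
    · rintro ⟨w, hw, rfl⟩
      exact ⟨⟨(w : H), hw⟩, rfl⟩
    · rintro ⟨v, rfl⟩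
      exact ⟨⟨(v : H), hVW v.2⟩, v.2, rfl⟩
  have hRA : LinearMap.range A.toLinearMap = LinearMap.range B.toLinearMap ⊔ Submodule.map A.toLinearMap F' := by
    have h1 : LinearMap.range A.toLinearMap = Submodule.map A.toLinearMap ⊤ := by
      rw [Submodule.map_top]
    rw [h1, ← hF'.codisjoint.eq_top, Submodule.map_sup, hmapV']
  -- cokernels
  have hcokAB : FiniteDimensional ℂ (Y ⧸ LinearMap.range A.toLinearMap) →
      FiniteDimensional ℂ (Y ⧸ LinearMap.range B.toLinearMap) := by
    intro hc
    have hKeq : Submodule.map (LinearMap.range B.toLinearMap).mkQ (LinearMap.range A.toLinearMap) =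
        Submodule.map (LinearMap.range B.toLinearMap).mkQ (Submodule.map A.toLinearMap F') := by
      rw [hRA, Submodule.map_sup]
      rw [Submodule.mkQ_map_self, bot_sup_eq]
    haveI hKfd : FiniteDimensional ℂ
        (Submodule.map (LinearMap.range B.toLinearMap).mkQ (LinearMap.range A.toLinearMap)) := by
      rw [hKeq]; infer_instance
    have hquot : FiniteDimensional ℂ
        ((Y ⧸ LinearMap.range B.toLinearMap) ⧸
          Submodule.map (LinearMap.range B.toLinearMap).mkQ (LinearMap.range A.toLinearMap)) :=
      (Submodule.quotientQuotientEquivQuotient (LinearMap.range B.toLinearMap) (LinearMap.range A.toLinearMap)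
        hRBA).symm.finiteDimensional
    exact findim_ext _ hKfd hquot
  have hcokBA : FiniteDimensional ℂ (Y ⧸ LinearMap.range B.toLinearMap) →
      FiniteDimensional ℂ (Y ⧸ LinearMap.range A.toLinearMap) := by
    intro hc
    have hsurj : Function.Surjective
        (Submodule.mapQ (LinearMap.range B.toLinearMap) (LinearMap.range A.toLinearMap) LinearMap.id hRBA) := by
      intro x
      obtain ⟨y, rfl⟩ := (LinearMap.range A.toLinearMap).mkQ_surjective x
      exact ⟨(LinearMap.range B.toLinearMap).mkQ y, by simp [Submodule.mapQ_apply]⟩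
    exact Module.Finite.of_surjective _ hsurj
  constructor
  · rintro ⟨hk, hc, -⟩
    have hk' := hkerBA hk
    have hc' := hcokAB hc
    exact ⟨hk', hc', closedRange_of_findim_coker B hc'⟩
  · rintro ⟨hk, hc, -⟩
    have hk' := hkerAB hk
    have hc' := hcokBA hc
    exact ⟨hk', hc', closedRange_of_findim_coker A hc'⟩

/-- Transfer of compactness along a finite-codimension inclusion `V ≤ W`. -/
theorem cpt_step {Y : Type*} [NormedAddCommGroup Y] [NormedSpace ℂ Y]
    (T : H →L[ℂ] Y) (W V : Submodule ℂ H)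
    (hWc : IsClosed (W : Set H)) (hVc : IsClosed (V : Set H)) (hVW : V ≤ W)
    (hfin : FiniteDimensional ℂ (↥W ⧸ V.comap W.subtype)) :
    IsCompactOperator (T.comp W.subtypeL) ↔ IsCompactOperator (T.comp V.subtypeL) := by
  haveI := hfin
  haveI : CompleteSpace W := hWc.completeSpace_coe
  set V' : Submodule ℂ ↥W := V.comap W.subtype with hV'
  have hV'c : IsClosed (V' : Set ↥W) := hVc.preimage continuous_subtype_val
  haveI : CompleteSpace V' := hV'c.completeSpace_coe
  haveI : HasOrthogonalProjection V' := inferInstance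
  haveI : FiniteDimensional ℂ V'ᗮ :=
    (Submodule.quotientEquivOfIsCompl V' V'ᗮ
      Submodule.isCompl_orthogonal_of_hasOrthogonalProjection).finiteDimensional
  -- the continuous inclusion of V into W
  let jlin : ↥V →ₗ[ℂ] ↥W := LinearMap.codRestrict W V.subtype (fun v => hVW v.2)
  have hjiso : ∀ v : ↥V, ‖jlin v‖ = ‖v‖ := fun v => rfl
  let j : ↥V →L[ℂ] ↥W := LinearMap.mkContinuous jlin 1 (fun v => by rw [hjiso, one_mul])
  -- the continuous map V' → V
  let mlin : ↥V' →ₗ[ℂ] ↥V :=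
    LinearMap.codRestrict V (W.subtype.comp V'.subtype) (fun x => x.2)
  have hmiso : ∀ x : ↥V', ‖mlin x‖ = ‖x‖ := fun x => rfl
  let m : ↥V' →L[ℂ] ↥V := LinearMap.mkContinuous mlin 1 (fun x => by rw [hmiso, one_mul])
  constructor
  · intro hA
    have hBeq : T.comp V.subtypeL = (T.comp W.subtypeL).comp j := by
      ext v; rfl
    rw [hBeq, ContinuousLinearMap.coe_comp']
    exact hA.comp_clm j
  · intro hB
    have hdecomp : T.comp W.subtypeL =
        (T.comp V.subtypeL).comp (m.comp (orthogonalProjection V')) +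
        ((T.comp W.subtypeL).comp V'ᗮ.subtypeL).comp (orthogonalProjection V'ᗮ) := by
      ext x
      simp only [ContinuousLinearMap.add_apply, ContinuousLinearMap.comp_apply,
        Submodule.subtypeL_apply]
      rw [← map_add]
      congr 1
      have hx := orthogonalProjection_add_orthogonalProjection_orthogonal V' x
      have h2 : ((m ((orthogonalProjection V') x) : ↥V) : H) =
          (((orthogonalProjection V') x : ↥W) : H) := rfl
      rw [h2, ← Submodule.coe_add, hx]
    rw [hdecomp, ContinuousLinearMap.coe_add']
    have h1 : IsCompactOperator
        ⇑((T.comp V.subtypeL).comp (m.comp (orthogonalProjection V'))) := by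
      rw [ContinuousLinearMap.coe_comp']
      exact hB.comp_clm _
    have h2 : IsCompactOperator
        ⇑(((T.comp W.subtypeL).comp V'ᗮ.subtypeL).comp (orthogonalProjection V'ᗮ)) := by
      rw [ContinuousLinearMap.coe_comp']
      exact (isCompactOperator_of_findim_domain _).comp_clm _
    exact h1.add h2

/-- If `W ∩ W'` has finite codimension in both `W` and `W'`, then the Fredholm and
compactness conditions defining the Sato Grassmannian hold for `W` iff they hold
for `W'`; consequently `W ∈ Gr⁺(H)` iff `W' ∈ Gr⁺(H)`. -/
theorem commensurable_grassmannian (Hp : Submodule ℂ H) [HasOrthogonalProjection Hp]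
    (W W' : Submodule ℂ H)
    (hWc : IsClosed (W : Set H)) (hW'c : IsClosed (W' : Set H))
    (hfin : FiniteDimensional ℂ (↥W ⧸ (W ⊓ W').comap W.subtype))
    (hfin' : FiniteDimensional ℂ (↥W' ⧸ (W ⊓ W').comap W'.subtype)) :
    (IsFredholm ((orthogonalProjection Hp).comp W.subtypeL) ↔
      IsFredholm ((orthogonalProjection Hp).comp W'.subtypeL)) ∧
    (IsCompactOperator ((orthogonalProjection Hpᗮ).comp W.subtypeL) ↔
      IsCompactOperator ((orthogonalProjection Hpᗮ).comp W'.subtypeL)) ∧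
    (InGr Hp W ↔ InGr Hp W') := by
  have hHpc : IsClosed (Hp : Set H) := by
    rw [← Submodule.orthogonal_orthogonal Hp]
    exact Submodule.isClosed_orthogonal _
  haveI : CompleteSpace Hp := hHpc.completeSpace_coe
  have hVc : IsClosed ((W ⊓ W' : Submodule ℂ H) : Set H) := by
    rw [Submodule.coe_inf]
    exact hWc.inter hW'c
  have f1 := fred_step (orthogonalProjection Hp) W (W ⊓ W') hWc hVc inf_le_left hfin
  have f2 := fred_step (orthogonalProjection Hp) W' (W ⊓ W') hW'c hVc inf_le_right hfin'
  have c1 := cpt_step (orthogonalProjection Hpᗮ) W (W ⊓ W') hWc hVc inf_le_left hfin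
  have c2 := cpt_step (orthogonalProjection Hpᗮ) W' (W ⊓ W') hW'c hVc inf_le_right hfin'
  refine ⟨f1.trans f2.symm, c1.trans c2.symm, ?_⟩
  constructor
  · rintro ⟨-, h2, h3⟩
    exact ⟨hW'c, (f1.trans f2.symm).1 h2, (c1.trans c2.symm).1 h3⟩
  · rintro ⟨-, h2, h3⟩
    exact ⟨hWc, (f1.trans f2.symm).2 h2, (c1.trans c2.symm).2 h3⟩
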